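/- Assume (A1) and (A3) hold with tail index α ∈ (1, 2), and let h be a function with h(t) → ∞, h(t) = o(t), and 0 < h(t) < t/2 for all large t. Then lim_{δ ↘ 0} limsup_{t → ∞} ∫_{h(t)/t}^{δ} (F̄(t(1−u))/F̄(t) − 1)·(F̄(tu)/F̄(t)) du = 0. -/

import Mathlib

open MeasureTheory ProbabilityTheory Filter Set
open scoped ENNReal

set_option maxHeartbeats 1000000

lemma stmt8_ratio_bound (f : ℝ → ℝ) (hf : Continuous f) (hnn : ∀ x, 0 ≤ f x)
    (β : ℝ) (hβ : 0 < β)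
    (hconv : ∀ u : ℝ, 0 < u → Tendsto (fun t => f (u * t) / f t) atTop (nhds (u ^ (-β)))) :
    ∃ C₁ C₂ T : ℝ, 0 < C₂ ∧ 0 < C₁ ∧
      ∀ t : ℝ, T ≤ t → ∀ s ∈ Icc (t / 2) t, C₂ * f t ≤ f s ∧ f s ≤ C₁ * f t := by
  -- f is eventually positive
  have hfpos : ∀ᶠ t in atTop, 0 < f t := by
    have h1 := hconv 1 one_pos
    simp only [one_mul, Real.one_rpow] at h1
    have h2 := h1.eventually (lt_mem_nhds (by norm_num : (1:ℝ)/2 < 1))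
    refine h2.mono fun t ht => ?_
    ·
      by_contra hle
      push_neg at hle
      have : f t = 0 := le_antisymm hle (hnn t)
      rw [this, div_zero] at ht
      norm_num at ht
  obtain ⟨N₀, hN₀⟩ := eventually_atTop.1 hfpos
  -- the closed sets
  set S : ℕ → Set ℝ := fun n => {u : ℝ | u ∈ Icc (1/2:ℝ) 1 ∧ ∀ t : ℝ, (n:ℝ) ≤ t →
      f (u * t) ≤ 2 * u ^ (-β) * f t ∧ u ^ (-β) * f t ≤ 2 * f (u * t)} with hS
  have hSclosed : ∀ n, IsClosed (S n) := by
    intro n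
    have : S n = ⋂ t ∈ Ici (n:ℝ), (Icc (1/2:ℝ) 1 ∩
        {u : ℝ | f (u * t) - 2 * u ^ (-β) * f t ≤ 0 ∧ u ^ (-β) * f t - 2 * f (u * t) ≤ 0}) := by
      ext u
      simp only [hS, mem_setOf_eq, mem_iInter, mem_inter_iff, mem_Ici, sub_nonpos]
      constructor
      · rintro ⟨hu, hall⟩ t ht
        exact ⟨hu, by simpa [sub_nonpos] using (hall t ht).1, by simpa [sub_nonpos] using (hall t ht).2⟩
      · intro hall
        refine ⟨(hall n le_rfl).1, fun t ht => ?_⟩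
        obtain ⟨_, h1, h2⟩ := hall t ht
        exact ⟨by linarith [h1], by linarith [h2]⟩
    rw [this]
    refine isClosed_biInter fun t _ => ?_
    have hrc : ContinuousOn (fun u : ℝ => u ^ (-β)) (Icc (1/2:ℝ) 1) := by
      apply ContinuousOn.rpow_const continuousOn_id
      intro x hx
      exact Or.inl (by rw [id]; linarith [hx.1])
    have hc1 : ContinuousOn (fun u : ℝ => (f (u * t) - 2 * u ^ (-β) * f t,
        u ^ (-β) * f t - 2 * f (u * t))) (Icc (1/2:ℝ) 1) := by
      apply ContinuousOn.prodMk
      · exact ((hf.comp (continuous_mul_right t)).continuousOn).sub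
          (((continuousOn_const.mul hrc).mul continuousOn_const))
      · exact (hrc.mul continuousOn_const).sub
          (continuousOn_const.mul (hf.comp (continuous_mul_right t)).continuousOn)
    have := hc1.preimage_isClosed_of_isClosed isClosed_Icc
      (IsClosed.prod isClosed_Iic isClosed_Iic : IsClosed (Iic (0:ℝ) ×ˢ Iic (0:ℝ)))
    exact this
  -- covering
  have hScover : ∀ u ∈ Icc (1/2:ℝ) 1, ∃ n : ℕ, u ∈ S n := by
    intro u hu
    have hu0 : (0:ℝ) < u := by linarith [hu.1]
    have hL : (0:ℝ) < u ^ (-β) := Real.rpow_pos_of_pos hu0 _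
    have hev : ∀ᶠ t in atTop, f (u * t) / f t ∈ Ioo (u ^ (-β) / 2) (2 * u ^ (-β)) := by
      apply (hconv u hu0).eventually
      apply Ioo_mem_nhds <;> linarith
    obtain ⟨x₀, hx₀⟩ := eventually_atTop.1 (hev.and hfpos)
    obtain ⟨n, hn⟩ := exists_nat_ge (max x₀ N₀)
    refine ⟨n, hu, fun t ht => ?_⟩
    have htx : x₀ ≤ t := le_trans (le_trans (le_max_left _ _) hn) ht
    obtain ⟨⟨hr1, hr2⟩, hft⟩ := hx₀ t htx
    have hft' : f t ≠ 0 := ne_of_gt hft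
    have heq : f (u * t) = (f (u * t) / f t) * f t := by field_simp
    constructor
    · rw [heq]; nlinarith [hr2, hft]
    · nlinarith [hr1, hft, (div_lt_iff₀ hft).1 hr2, (lt_div_iff₀ hft).1 hr1]
  -- Baire category on the subtype
  haveI : Nonempty (Icc (1/2:ℝ) 1) := ⟨⟨1, by constructor <;> norm_num⟩⟩
  have hBaire : ∃ n : ℕ, (interior (Subtype.val ⁻¹' S n : Set (Icc (1/2:ℝ) 1))).Nonempty := by
    apply nonempty_interior_of_iUnion_of_closed
    · exact fun n => (hSclosed n).preimage continuous_subtype_val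
    · ext ⟨u, hu⟩
      simp only [mem_iUnion, mem_preimage, mem_univ, iff_true]
      exact hScover u hu
  obtain ⟨n, x, hx⟩ := hBaire
  rw [mem_interior_iff_mem_nhds, Metric.mem_nhds_iff] at hx
  obtain ⟨ε, hε, hball⟩ := hx
  set x₀ : ℝ := (x : ℝ) with hx₀def
  have hx₀mem : x₀ ∈ Icc (1/2:ℝ) 1 := x.2
  set c : ℝ := max (x₀ - ε/2) (1/2) with hcdef
  set d : ℝ := min (x₀ + ε/2) 1 with hddef
  have hcd : c < d := by
    apply max_lt <;> [skip; skip] <;> apply lt_min <;>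
      first
        | linarith [hx₀mem.1, hx₀mem.2, hε]
  have hc0 : (0:ℝ) < c := lt_of_lt_of_le (by norm_num) (le_max_right _ _)
  have hd1 : d ≤ 1 := min_le_right _ _
  have hmemS : ∀ u ∈ Icc c d, u ∈ S n := by
    intro u hu
    have huI : u ∈ Icc (1/2:ℝ) 1 :=
      ⟨le_trans (le_max_right _ _) hu.1, le_trans hu.2 (min_le_right _ _)⟩
    have hdist : dist (⟨u, huI⟩ : Icc (1/2:ℝ) 1) x < ε := by
      rw [Subtype.dist_eq]
      rw [Real.dist_eq]
      have h1 : u - x₀ ≤ ε/2 := by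
        have := hu.2
        have := min_le_left (x₀ + ε/2) 1
        linarith [le_trans hu.2 (min_le_left _ _)]
      have h2 : x₀ - u ≤ ε/2 := by
        linarith [le_trans (le_max_left (x₀ - ε/2) (1/2)) hu.1]
      rw [abs_lt]; constructor <;> linarith
    exact hball hdist
  clear_value c d
  -- base two-sided bound
  set ρ : ℝ := c / d with hρdef
  have hd0 : (0:ℝ) < d := lt_trans hc0 hcd
  have hρ0 : 0 < ρ := div_pos hc0 hd0
  have hρ1 : ρ < 1 := (div_lt_one hd0).2 hcd
  set B₁ : ℝ := 4 * ρ ^ (-β) with hB₁def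
  have hρpow : (0:ℝ) < ρ ^ (-β) := Real.rpow_pos_of_pos hρ0 _
  have hρpow1 : (1:ℝ) ≤ ρ ^ (-β) :=
    Real.one_le_rpow_of_pos_of_le_one_of_nonpos hρ0 hρ1.le (by linarith)
  have hB₁1 : (1:ℝ) ≤ B₁ := by rw [hB₁def]; nlinarith
  clear_value ρ
  clear_value B₁
  have hbase : ∀ r ∈ Icc ρ 1, ∀ t : ℝ, (n:ℝ) ≤ t →
      (1/4:ℝ) * f t ≤ f (r * t) ∧ f (r * t) ≤ B₁ * f t := by
    intro r hr t ht
    have hr0 : 0 < r := lt_of_lt_of_le hρ0 hr.1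
    have ht0 : (0:ℝ) ≤ t := le_trans (Nat.cast_nonneg n) ht
    set t' : ℝ := t / d with ht'def
    clear_value t'
    have ht' : (n:ℝ) ≤ t' := by
      rw [ht'def]; exact le_trans ht (le_div_self ht0 hd0 hd1)
    have hu₁ : r * d ∈ Icc c d := by
      constructor
      · exact (div_le_iff₀ hd0).1 (hρdef ▸ hr.1)
      · calc r * d ≤ 1 * d := mul_le_mul_of_nonneg_right hr.2 hd0.le
          _ = d := one_mul d
    obtain ⟨-, hall₁⟩ := hmemS (r*d) hu₁
    obtain ⟨-, hall₂⟩ := hmemS d ⟨hcd.le, le_rfl⟩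
    obtain ⟨hup₁, hlo₁⟩ := hall₁ t' ht'
    obtain ⟨hup₂, hlo₂⟩ := hall₂ t' ht'
    have hrd : (r * d) * t' = r * t := by
      rw [ht'def]; field_simp
    have hdd : d * t' = t := by rw [ht'def]; field_simp
    rw [hrd] at hup₁ hlo₁
    rw [hdd] at hup₂ hlo₂
    set Dβ : ℝ := d ^ β with hDβ
    have hDβ0 : 0 < Dβ := Real.rpow_pos_of_pos hd0 _
    have hdneg : d ^ (-β) = Dβ⁻¹ := by rw [hDβ, Real.rpow_neg hd0.le]
    clear_value Dβ
    rw [hdneg] at hup₂ hlo₂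
    -- e1 : f t' ≤ 2 * Dβ * f t ; e2 : Dβ * f t ≤ 2 * f t'
    have e1 : f t' ≤ 2 * Dβ * f t := by
      have h := mul_le_mul_of_nonneg_left hlo₂ hDβ0.le
      rw [← mul_assoc, ← mul_assoc, mul_inv_cancel₀ hDβ0.ne'] at h
      nlinarith
    have e2 : Dβ * f t ≤ 2 * f t' := by
      have h := mul_le_mul_of_nonneg_left hup₂ hDβ0.le
      nlinarith [mul_inv_cancel₀ hDβ0.ne']
    have hrdβ : (r * d) ^ (-β) = r ^ (-β) * Dβ⁻¹ := by
      rw [Real.mul_rpow hr0.le hd0.le, hdneg]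
    rw [hrdβ] at hup₁ hlo₁
    set Rβ : ℝ := r ^ (-β) with hRβ
    have hrβ0 : 0 < Rβ := Real.rpow_pos_of_pos hr0 _
    have hrβρ : Rβ ≤ ρ ^ (-β) := by
      rw [hRβ]; exact Real.rpow_le_rpow_of_nonpos hρ0 hr.1 (by linarith)
    have hrβ1 : 1 ≤ Rβ := by
      rw [hRβ]; exact Real.one_le_rpow_of_pos_of_le_one_of_nonpos hr0 hr.2 (by linarith)
    clear_value Rβ
    clear hall₁ hall₂ hmemS hball hScover hSclosed hS hconv hf S
    have hft' : 0 ≤ f t' := hnn t'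
    have hft : 0 ≤ f t := hnn t
    constructor
    · -- lower bound
      -- hlo₁ : (r^(-β) * Dβ⁻¹) * f t ≤ 2 * f (r*t)?? No: hlo₁ : (r*d)^(-β) * f t' ≤ 2 * f (r*t)
      -- f(rt) ≥ (1/2) r^{-β} Dβ⁻¹ f t' and f t' ≥ (1/2) Dβ f t
      have h2 : Dβ * f t ≤ 2 * f t' := e2
      have key : Rβ * f t ≤ 4 * f (r * t) := by
        have h3 := mul_le_mul_of_nonneg_left h2 (mul_pos hrβ0 (inv_pos.2 hDβ0)).le
        have h4 : Rβ * Dβ⁻¹ * (Dβ * f t) = Rβ * f t := by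
          field_simp
        nlinarith [hlo₁]
      nlinarith
    · -- upper bound
      have key : f (r * t) ≤ 4 * Rβ * f t := by
        have h3 := mul_le_mul_of_nonneg_left e1 (by positivity : (0:ℝ) ≤ 2 * (Rβ * Dβ⁻¹))
        have h4 : 2 * (Rβ * Dβ⁻¹) * (2 * Dβ * f t) = 4 * Rβ * f t := by
          field_simp; ring
        nlinarith [hup₁]
      have hfin : 4 * Rβ * f t ≤ B₁ * f t := by
        rw [hB₁def]
        nlinarith
      linarith
  -- iterate
  have hiter : ∀ m : ℕ, ∀ r ∈ Icc (ρ ^ (m+1)) 1, ∀ t : ℝ, (n:ℝ) / ρ ^ m ≤ t →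
      (1/4:ℝ) ^ (m+1) * f t ≤ f (r * t) ∧ f (r * t) ≤ B₁ ^ (m+1) * f t := by
    intro m
    induction m with
    | zero =>
      intro r hr t ht
      have := hbase r (by simpa using hr) t (by simpa using ht)
      simpa using this
    | succ m IH =>
      intro r hr t ht
      have hρm : (0:ℝ) < ρ ^ (m+1) := pow_pos hρ0 _
      have hρmm : ρ ^ (m+1+1) ≤ ρ ^ (m+1) := by
        apply pow_le_pow_of_le_one hρ0.le hρ1.le; omega
      have hρm'  : ρ ^ (m+1) ≤ ρ ^ m := by
        apply pow_le_pow_of_le_one hρ0.le hρ1.le; omega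
      have htm : (n:ℝ) / ρ ^ m ≤ t :=
        le_trans (div_le_div_of_nonneg_left (Nat.cast_nonneg n) hρm hρm') ht
      by_cases hcase : ρ ^ (m+1) ≤ r
      · obtain ⟨h1, h2⟩ := IH r ⟨hcase, hr.2⟩ t htm
        have hft : 0 ≤ f t := hnn t
        have hq1 : (1/4:ℝ) ^ (m+1+1) ≤ (1/4:ℝ) ^ (m+1) := by
          apply pow_le_pow_of_le_one (by norm_num) (by norm_num); omega
        have hq2 : B₁ ^ (m+1) ≤ B₁ ^ (m+1+1) := by
          apply pow_le_pow_right₀ hB₁1; omega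
        constructor
        · exact le_trans (mul_le_mul_of_nonneg_right hq1 hft) h1
        · exact le_trans h2 (mul_le_mul_of_nonneg_right hq2 hft)
      · push_neg at hcase
        set s : ℝ := r / ρ ^ (m+1) with hsdef
        have hr0 : 0 < r := lt_of_lt_of_le (pow_pos hρ0 _) hr.1
        have hs : s ∈ Icc ρ 1 := by
          constructor
          · rw [hsdef, le_div_iff₀ hρm]
            calc ρ * ρ ^ (m+1) = ρ ^ (m+1+1) := by ring
              _ ≤ r := hr.1
          · rw [hsdef, div_le_one hρm]; exact hcase.le
        have hstt : s * (ρ ^ (m+1) * t) = r * t := by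
          rw [hsdef]; field_simp
        have hn' : (n:ℝ) ≤ ρ ^ (m+1) * t := by
          rw [div_le_iff₀ hρm] at ht; linarith [ht]
        obtain ⟨hb1, hb2⟩ := hbase s hs (ρ ^ (m+1) * t) hn'
        rw [hstt] at hb1 hb2
        obtain ⟨hi1, hi2⟩ := IH (ρ ^ (m+1)) ⟨le_rfl, pow_le_one₀ hρ0.le hρ1.le⟩ t htm
        have hfρt : 0 ≤ f (ρ ^ (m+1) * t) := hnn _
        constructor
        · have e : (1/4:ℝ) ^ (m+1+1) * f t = (1/4:ℝ) * ((1/4:ℝ) ^ (m+1) * f t) := by ring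
          rw [e]
          have e2 : (1/4:ℝ) * ((1/4:ℝ) ^ (m+1) * f t) ≤ (1/4:ℝ) * f (ρ ^ (m+1) * t) := by
            apply mul_le_mul_of_nonneg_left hi1; norm_num
          exact le_trans e2 hb1
        · have e2 : B₁ * f (ρ ^ (m+1) * t) ≤ B₁ * (B₁ ^ (m+1) * f t) := by
            apply mul_le_mul_of_nonneg_left hi2; linarith
          have e : B₁ * (B₁ ^ (m+1) * f t) = B₁ ^ (m+1+1) * f t := by ring
          exact le_trans hb2 (by rw [← e]; exact e2)
  obtain ⟨m₀, hm₀⟩ := exists_pow_lt_of_lt_one one_half_pos hρ1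
  refine ⟨B₁ ^ (m₀+1), (1/4:ℝ) ^ (m₀+1), max ((n:ℝ) / ρ ^ m₀) 1,
    pow_pos (by norm_num) _, pow_pos (by linarith) _, ?_⟩
  intro t hT s hs
  have ht1 : (1:ℝ) ≤ t := le_trans (le_max_right _ _) hT
  have ht0 : (0:ℝ) < t := by linarith
  have hr : s / t ∈ Icc (ρ ^ (m₀+1)) 1 := by
    constructor
    · have h12 : (1/2:ℝ) ≤ s / t := by
        rw [le_div_iff₀ ht0]; linarith [hs.1]
      have : ρ ^ (m₀+1) ≤ ρ ^ m₀ := by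
        apply pow_le_pow_of_le_one hρ0.le hρ1.le; omega
      linarith [hm₀]
    · rw [div_le_one ht0]; exact hs.2
  have := hiter m₀ (s/t) hr t (le_trans (le_max_left _ _) hT)
  rw [div_mul_cancel₀ s (ne_of_gt ht0)] at this
  exact ⟨this.1, this.2⟩
open MeasureTheory Filter Set intervalIntegral
open scoped ENNReal
set_option maxHeartbeats 1000000

lemma stmt8_intable (F : ℝ → ℝ) (hmeas : Measurable F) (hb : ∀ x, |F x| ≤ 1)
    (t a b : ℝ) : IntervalIntegrable (fun u => u * F (t*u)) volume a b := by
  rw [intervalIntegrable_iff]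
  apply Measure.integrableOn_of_bounded (M := |a| + |b|)
  · exact (measure_Ioc_lt_top).ne
  · exact (measurable_id.mul (hmeas.comp (measurable_const_mul t))).aestronglyMeasurable
  · apply (ae_restrict_iff' measurableSet_uIoc).2
    apply ae_of_all
    intro u hu
    have h1 : u ≤ |a| + |b| := le_trans hu.2 (sup_le
      (by linarith [le_abs_self a, abs_nonneg b]) (by linarith [le_abs_self b, abs_nonneg a]))
    have h2 : -(|a| + |b|) ≤ u := le_trans (le_inf
      (by linarith [neg_abs_le a, abs_nonneg b]) (by linarith [neg_abs_le b, abs_nonneg a]))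
      hu.1.le
    have h3 : |u| ≤ |a| + |b| := abs_le.2 ⟨h2, h1⟩
    calc ‖u * F (t*u)‖ = |u| * |F (t*u)| := abs_mul _ _
      _ ≤ (|a| + |b|) * 1 := mul_le_mul h3 (hb _) (abs_nonneg _) (by positivity)
      _ = |a| + |b| := mul_one _

lemma stmt8_double_iter (F : ℝ → ℝ) (c T : ℝ) (hT : 0 < T)
    (hdub : ∀ x : ℝ, T ≤ x → F (x/2) ≤ c * F x) (hc : 0 < c) (hnn : ∀ x, 0 ≤ F x) :
    ∀ n : ℕ, ∀ x : ℝ, T ≤ x / 2^n → F (x / 2^n) ≤ c^n * F x := by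
  intro n
  induction n with
  | zero => intro x hx; simpa using le_rfl
  | succ n IH =>
    intro x hx
    have h2n : (0:ℝ) < 2^n := by positivity
    have hx0 : 0 < x := by
      rcases div_pos_iff.1 (lt_of_lt_of_le hT hx) with ⟨hh, -⟩ | ⟨-, hh⟩
      · exact hh
      · exact absurd hh (by positivity : (0:ℝ) < 2^(n+1)).not_gt
    have hxn : T ≤ x / 2^n := by
      apply le_trans hx
      apply div_le_div_of_nonneg_left hx0.le h2n
      rw [pow_succ]; nlinarith
    have heq : x / 2^(n+1) = (x / 2^n) / 2 := by
      rw [pow_succ]; ring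
    calc F (x / 2^(n+1)) = F ((x / 2^n)/2) := by rw [heq]
      _ ≤ c * F (x / 2^n) := hdub _ hxn
      _ ≤ c * (c^n * F x) := mul_le_mul_of_nonneg_left (IH x hxn) hc.le
      _ = c^(n+1) * F x := by ring

lemma stmt8_dyadic (F : ℝ → ℝ) (hmeas : Measurable F) (hnn : ∀ x, 0 ≤ F x) (hb : ∀ x, |F x| ≤ 1)
    (hanti : Antitone F)
    (c T : ℝ) (hT : 0 < T) (hc0 : 0 < c) (hc4 : c < 4)
    (hdub : ∀ x : ℝ, T ≤ x → F (x/2) ≤ c * F x)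
    (t δ : ℝ) (ht : 0 < t) (hδ : 0 < δ) :
    ∀ n : ℕ, T ≤ t * δ / 2^n →
      ∫ u in (δ/2^n)..δ, u * F (t*u) ≤
        (c/(1-c/4)) * (1 - (c/4)^n) * (δ^2 * F (t*δ)) := by
  intro n
  induction n with
  | zero => simp
  | succ n IH =>
    intro hx
    have h2n : (0:ℝ) < 2^n := by positivity
    have h2n1 : (0:ℝ) < 2^(n+1) := by positivity
    have htδ : 0 < t * δ := by positivity
    have hxn : T ≤ t * δ / 2^n := by
      apply le_trans hx
      apply div_le_div_of_nonneg_left htδ.le h2n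
      rw [pow_succ]; nlinarith
    have hsplit : ∫ u in (δ/2^(n+1))..δ, u * F (t*u) =
        (∫ u in (δ/2^(n+1))..(δ/2^n), u * F (t*u)) + ∫ u in (δ/2^n)..δ, u * F (t*u) :=
      (integral_add_adjacent_intervals (stmt8_intable F hmeas hb t _ _)
        (stmt8_intable F hmeas hb t _ _)).symm
    -- bound the new piece
    have hple : δ/2^(n+1) ≤ δ/2^n := by
      apply div_le_div_of_nonneg_left hδ.le h2n
      rw [pow_succ]; nlinarith
    have hppos : (0:ℝ) < δ/2^(n+1) := by positivity
    have hFp : F (t * (δ/2^(n+1))) ≤ c^(n+1) * F (t*δ) := by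
      have : t * (δ/2^(n+1)) = (t * δ)/2^(n+1) := by ring
      rw [this]
      exact stmt8_double_iter F c T hT hdub hc0 hnn (n+1) (t*δ) hx
    have hpiece : (∫ u in (δ/2^(n+1))..(δ/2^n), u * F (t*u)) ≤
        c^(n+1) * F (t*δ) * (((δ/2^n)^2 - (δ/2^(n+1))^2)/2) := by
      have hmono : ∫ u in (δ/2^(n+1))..(δ/2^n), u * F (t*u) ≤
          ∫ u in (δ/2^(n+1))..(δ/2^n), u * F (t * (δ/2^(n+1))) := by
        apply integral_mono_on hple (stmt8_intable F hmeas hb t _ _)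
        · apply IntervalIntegrable.continuousOn_mul
          · exact intervalIntegrable_const
          · exact continuousOn_id
        · intro u hu
          apply mul_le_mul_of_nonneg_left _ (le_trans hppos.le hu.1)
          apply hanti
          exact mul_le_mul_of_nonneg_left hu.1 ht.le
      apply le_trans hmono
      rw [intervalIntegral.integral_mul_const, integral_id]
      rw [mul_comm (c^(n+1) * F (t*δ))]
      apply mul_le_mul_of_nonneg_left hFp
      nlinarith [sq_nonneg (δ/2^n), sq_nonneg (δ/2^(n+1)), hple, hppos]
    have harith : c^(n+1) * F (t*δ) * (((δ/2^n)^2 - (δ/2^(n+1))^2)/2) ≤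
        c * (c/4)^n * (δ^2 * F (t*δ)) := by
      have hP : (2:ℝ)^(n+1) = 2 * 2^n := by rw [pow_succ]; ring
      have h4 : (4:ℝ)^n = (2^n)^2 := by
        rw [← pow_mul, mul_comm, pow_mul]; norm_num
      have hq : ((1:ℝ)/4)^n = 1/(2^n)^2 := by rw [div_pow, one_pow, h4]
      have he : ((δ/2^n)^2 - (δ/2^(n+1))^2)/2 = (3/8) * δ^2 * (1/4)^n := by
        rw [hP, hq]
        have h2n' : ((2:ℝ)^n) ≠ 0 := by positivity
        field_simp
        ring
      rw [he]
      have hFnn := hnn (t*δ)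
      have key : c^(n+1) * F (t*δ) * ((3/8) * δ^2 * (1/4)^n)
          = (3/8) * (c * (c/4)^n * (δ^2 * F (t*δ))) := by
        have e : (c/4:ℝ)^n = c^n * (1/4)^n := by
          rw [div_eq_mul_one_div c 4, mul_pow]
        rw [e, pow_succ]
        ring
      rw [key]
      have hY : 0 ≤ c * (c/4)^n * (δ^2 * F (t*δ)) := by
        have : (0:ℝ) < (c/4)^n := pow_pos (by linarith) n
        have := sq_nonneg δ
        positivity
      linarith
    have h14 : (1:ℝ) - c/4 ≠ 0 := by intro hh; nlinarith
    have hK : (c/(1-c/4)) * (1-c/4) = c := div_mul_cancel₀ c h14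
    have hsum : (c/(1-c/4)) * (1 - (c/4)^n) * (δ^2 * F (t*δ)) + c * (c/4)^n * (δ^2 * F (t*δ))
        = (c/(1-c/4)) * (1 - (c/4)^(n+1)) * (δ^2 * F (t*δ)) := by
      rw [pow_succ]
      linear_combination (-((c/4)^n * (δ^2 * F (t*δ)))) * hK
    rw [hsplit]
    linarith [IH hxn, hpiece, harith, hsum.le, hsum.ge]


/-- Under (A1) and (A3) with `α ∈ (1,2)`, and `h(t) → ∞`,
`h(t) = o(t)`, `0 < h(t) < t/2` for large `t`, the double limit
`lim_{δ ↘ 0} limsup_{t → ∞} ∫_{h(t)/t}^δ (F̄(t(1−u))/F̄(t) − 1)·(F̄(tu)/F̄(t)) du = 0`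
holds. -/
theorem stmt8
    {Ω : Type*} [MeasurableSpace Ω] (P : Measure Ω) [IsProbabilityMeasure P]
    (X : Ω → ℝ) (hXm : Measurable X)
    (hXint : Integrable X P) (hXmean : ∫ ω, X ω ∂P < 0)
    (hXsupp : ∀ t : ℝ, 0 < P {ω | X ω > t})
    (Fbar : ℝ → ℝ) (hFbar : ∀ t, Fbar t = (P {ω | X ω > t}).toReal)
    (α : ℝ) (hα1 : 1 < α) (hα2 : α < 2)
    (hA1 : ∀ u : ℝ, 0 < u →
      Tendsto (fun t => Fbar (u * t) / Fbar t) atTop (nhds (u ^ (-α))))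
    (hA3 : ∃ f : ℝ → ℝ, Continuous f ∧ (∀ x, 0 ≤ f x) ∧
      P.map X = volume.withDensity (fun x => ENNReal.ofReal (f x)) ∧
      ∀ u : ℝ, 0 < u →
        Tendsto (fun t => f (u * t) / f t) atTop (nhds (u ^ (-(α + 1)))))
    (h : ℝ → ℝ)
    (hhtop : Tendsto h atTop atTop) (hho : h =o[atTop] (fun t => t))
    (hhb : ∀ᶠ t in atTop, 0 < h t ∧ h t < t / 2) :
    Tendsto (fun δ : ℝ => Filter.limsup (fun t : ℝ =>
        ∫ u in (h t / t)..δ,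
          (Fbar (t * (1 - u)) / Fbar t - 1) * (Fbar (t * u) / Fbar t)) atTop)
      (nhdsWithin 0 (Set.Ioi 0)) (nhds 0) := by
  set I : ℝ → ℝ → ℝ := fun t δ => ∫ u in (h t / t)..δ,
      (Fbar (t * (1 - u)) / Fbar t - 1) * (Fbar (t * u) / Fbar t) with hIdef
  -- main eventual bound, proved later
  have EVB : ∃ C₈ : ℝ, 0 ≤ C₈ ∧ ∀ δ : ℝ, 0 < δ → δ ≤ 1/2 →
      ∀ᶠ t in atTop, 0 ≤ I t δ ∧ I t δ ≤ C₈ * δ^2 * (Fbar (δ * t) / Fbar t) := by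
    obtain ⟨f, hfc, hfnn, hmap, hfconv⟩ := hA3
    -- basic facts about Fbar
    have hFpos : ∀ t, 0 < Fbar t := fun t => by
      rw [hFbar]
      exact ENNReal.toReal_pos (hXsupp t).ne' (measure_ne_top P _)
    have hFle1 : ∀ t, Fbar t ≤ 1 := fun t => by
      rw [hFbar]
      calc (P {ω | X ω > t}).toReal ≤ (1 : ℝ≥0∞).toReal :=
          ENNReal.toReal_mono ENNReal.one_ne_top prob_le_one
        _ = 1 := ENNReal.toReal_one
    have hFnn : ∀ t, 0 ≤ Fbar t := fun t => (hFpos t).le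
    have hFabs : ∀ t, |Fbar t| ≤ 1 := fun t => by
      rw [abs_of_nonneg (hFnn t)]; exact hFle1 t
    have hFanti : Antitone Fbar := by
      intro s t hst
      rw [hFbar, hFbar]
      exact ENNReal.toReal_mono (measure_ne_top P _)
        (measure_mono fun ω hω => lt_of_le_of_lt hst hω)
    have hFmeas : Measurable Fbar := hFanti.measurable
    -- density representation
    have hmapIoi : ∀ x : ℝ, P {ω | X ω > x} = ∫⁻ s in Ioi x, ENNReal.ofReal (f s) := by
      intro x
      have h1 : P.map X (Ioi x) = P (X ⁻¹' (Ioi x)) := Measure.map_apply hXm measurableSet_Ioi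
      have h2 : X ⁻¹' (Ioi x) = {ω | X ω > x} := rfl
      rw [← h2, ← h1, hmap, withDensity_apply _ measurableSet_Ioi]
    have hfinIoi : ∀ x : ℝ, (∫⁻ s in Ioi x, ENNReal.ofReal (f s)) ≠ ∞ := fun x => by
      rw [← hmapIoi]; exact measure_ne_top P _
    have hFdiff : ∀ x y : ℝ, x ≤ y → Fbar x - Fbar y = ∫ s in Ioc x y, f s := by
      intro x y hxy
      have hunion : Ioc x y ∪ Ioi y = Ioi x := Ioc_union_Ioi_eq_Ioi hxy
      have hdisj : Disjoint (Ioc x y) (Ioi y) := Ioc_disjoint_Ioi le_rfl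
      have hsplit : (∫⁻ s in Ioi x, ENNReal.ofReal (f s))
          = (∫⁻ s in Ioc x y, ENNReal.ofReal (f s)) + ∫⁻ s in Ioi y, ENNReal.ofReal (f s) := by
        rw [← hunion, lintegral_union measurableSet_Ioi hdisj]
      have hne1 : (∫⁻ s in Ioc x y, ENNReal.ofReal (f s)) ≠ ∞ :=
        ne_top_of_le_ne_top (hfinIoi x) (lintegral_mono_set Ioc_subset_Ioi_self)
      have heq : ∫ s in Ioc x y, f s = (∫⁻ s in Ioc x y, ENNReal.ofReal (f s)).toReal := by
        rw [integral_eq_lintegral_of_nonneg_ae (ae_of_all _ hfnn)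
          hfc.aestronglyMeasurable.restrict]
      rw [hFbar, hFbar, hmapIoi, hmapIoi, hsplit,
        ENNReal.toReal_add hne1 (hfinIoi y), heq]
      ring
    -- ratio bound for the density
    obtain ⟨C₁, C₂, T_A, hC₂pos, hC₁pos, hAf⟩ :=
      stmt8_ratio_bound f hfc hfnn (α+1) (by linarith) hfconv
    -- doubling constant
    set c : ℝ := ((2:ℝ) ^ α + 4)/2 with hcdef
    have h2α : (0:ℝ) < (2:ℝ) ^ α := Real.rpow_pos_of_pos two_pos α
    have h2α4 : (2:ℝ) ^ α < 4 := by
      have h1 : (2:ℝ) ^ α < (2:ℝ) ^ (2:ℝ) := Real.rpow_lt_rpow_of_exponent_lt one_lt_two hα2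
      have h4 : (2:ℝ) ^ (2:ℝ) = 4 := by
        rw [show ((2:ℝ):ℝ) = ((2:ℕ):ℝ) by norm_num, Real.rpow_natCast]; norm_num
      linarith
    have hc0 : 0 < c := by rw [hcdef]; linarith
    have hc4 : c < 4 := by rw [hcdef]; linarith
    have hcgt : (2:ℝ) ^ α < c := by rw [hcdef]; linarith
    have hhalf : ((1:ℝ)/2) ^ (-α) = (2:ℝ) ^ α := by
      rw [one_div, Real.inv_rpow (by norm_num : (0:ℝ) ≤ 2),
        Real.rpow_neg (by norm_num : (0:ℝ) ≤ 2), inv_inv]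
    have hdubev : ∀ᶠ t in atTop, Fbar (t/2) ≤ c * Fbar t := by
      have htc := hA1 (1/2) (by norm_num)
      rw [hhalf] at htc
      filter_upwards [htc.eventually_lt_const hcgt] with t ht
      have h1 : (1:ℝ)/2 * t = t/2 := by ring
      rw [h1] at ht
      exact ((div_lt_iff₀ (hFpos t)).1 ht).le
    obtain ⟨T₀, hT₀⟩ := eventually_atTop.1 hdubev
    set T_D : ℝ := max T₀ 1 with hTDdef
    have hTDpos : 0 < T_D := lt_of_lt_of_le one_pos (le_max_right _ _)
    have hdub : ∀ x : ℝ, T_D ≤ x → Fbar (x/2) ≤ c * Fbar x := fun x hx =>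
      hT₀ x (le_trans (le_max_left _ _) hx)
    -- the key constant
    set C₅ : ℝ := C₁ * (2*c/C₂) with hC₅def
    have hC₅pos : 0 < C₅ := by
      rw [hC₅def]; positivity
    -- combined bound: Fbar(t(1-u)) - Fbar(t) ≤ C₅ u Fbar t
    have hBC : ∀ᶠ t in atTop, ∀ u ∈ Icc (0:ℝ) (1/2),
        Fbar (t*(1-u)) - Fbar t ≤ C₅ * u * Fbar t := by
      filter_upwards [eventually_ge_atTop (max T_A T_D), eventually_gt_atTop (0:ℝ)]
        with t hts ht0
      have htA : T_A ≤ t := le_trans (le_max_left _ _) hts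
      have htD : T_D ≤ t := le_trans (le_max_right _ _) hts
      have hIoc : IntegrableOn f (Ioc (t/2) t) volume := hfc.integrableOn_Ioc
      have hlow : (t/2) * (C₂ * f t) ≤ c * Fbar t := by
        have h1 : ∫ s in Ioc (t/2) t, (C₂ * f t) ∂volume ≤ ∫ s in Ioc (t/2) t, f s := by
          apply setIntegral_mono_on (integrableOn_const measure_Ioc_lt_top.ne)
            hIoc measurableSet_Ioc
          intro s hs
          exact (hAf t htA s ⟨hs.1.le, hs.2⟩).1
        have h2 : ∫ s in Ioc (t/2) t, (C₂ * f t) ∂volume = (t - t/2) * (C₂ * f t) := by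
          rw [setIntegral_const, Real.volume_real_Ioc_of_le (by linarith)]
          simp [smul_eq_mul]
        have h3 : Fbar (t/2) - Fbar t = ∫ s in Ioc (t/2) t, f s := hFdiff _ _ (by linarith)
        have h4 : Fbar (t/2) ≤ c * Fbar t := hdub t htD
        have h5 : 0 ≤ Fbar t := hFnn t
        have h6 : (t - t/2) = t/2 := by ring
        rw [h6] at h2
        linarith [h1, h2.ge, h2.le, h3.le, h3.ge]
      have htf : t * f t ≤ (2*c/C₂) * Fbar t := by
        rw [div_mul_eq_mul_div, le_div_iff₀ hC₂pos]
        linarith [hlow]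
      intro u hu
      have hu0 := hu.1
      have hu2 := hu.2
      have hle : t*(1-u) ≤ t := by nlinarith
      have hge : t/2 ≤ t*(1-u) := by nlinarith
      have h3 : Fbar (t*(1-u)) - Fbar t = ∫ s in Ioc (t*(1-u)) t, f s := hFdiff _ _ hle
      have h1 : ∫ s in Ioc (t*(1-u)) t, f s ≤ ∫ s in Ioc (t*(1-u)) t, (C₁ * f t) ∂volume := by
        apply setIntegral_mono_on hfc.integrableOn_Ioc
          (integrableOn_const measure_Ioc_lt_top.ne) measurableSet_Ioc
        intro s hs
        exact (hAf t htA s ⟨le_trans hge hs.1.le, hs.2⟩).2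
      have h2 : ∫ s in Ioc (t*(1-u)) t, (C₁ * f t) ∂volume = (t*u) * (C₁ * f t) := by
        rw [setIntegral_const, Real.volume_real_Ioc_of_le (by linarith)]
        simp only [smul_eq_mul]
        ring
      have hfin : (t*u) * (C₁ * f t) ≤ C₅ * u * Fbar t := by
        have he : (t*u) * (C₁ * f t) = (C₁ * u) * (t * f t) := by ring
        rw [he, hC₅def]
        have := mul_le_mul_of_nonneg_left htf
          (mul_nonneg hC₁pos.le hu0 : (0:ℝ) ≤ C₁ * u)
        calc (C₁ * u) * (t * f t) ≤ (C₁ * u) * ((2*c/C₂) * Fbar t) := this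
          _ = C₁ * (2*c/C₂) * u * Fbar t := by ring
      linarith [h3.le, h1, h2.le, h2.ge, hfin]
    -- conclusion
    refine ⟨C₅ * (c/(1-c/4)), ?_, ?_⟩
    · have h14 : (0:ℝ) < 1 - c/4 := by linarith
      positivity
    intro δ hδ0 hδh
    have hadiv : Tendsto (fun t => h t / t) atTop (nhds 0) := hho.tendsto_div_nhds_zero
    filter_upwards [hBC, hhb, eventually_gt_atTop (1:ℝ),
      hadiv.eventually_lt_const hδ0,
      hhtop.eventually (eventually_ge_atTop (2*T_D))] with t hBCt hhbt ht1 hat hht2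
    have ht0 : (0:ℝ) < t := lt_trans one_pos ht1
    set a : ℝ := h t / t with hadef
    have ha0 : 0 < a := div_pos hhbt.1 ht0
    have haδ : a < δ := hat
    -- nonnegativity of the integrand
    have hnnI : ∀ u ∈ Icc a δ, 0 ≤ (Fbar (t*(1-u))/Fbar t - 1) * (Fbar (t*u)/Fbar t) := by
      intro u hu
      have hu0 : 0 < u := lt_of_lt_of_le ha0 hu.1
      have h1 : t*(1-u) ≤ t := by nlinarith
      have h2 : Fbar t ≤ Fbar (t*(1-u)) := hFanti h1
      have h3 : 1 ≤ Fbar (t*(1-u))/Fbar t := (le_div_iff₀ (hFpos t)).2 (by linarith)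
      have h4 : 0 ≤ Fbar (t*u)/Fbar t := div_nonneg (hFnn _) (hFnn t)
      nlinarith
    have hInn : 0 ≤ I t δ :=
      intervalIntegral.integral_nonneg haδ.le (fun u hu => hnnI u hu)
    refine ⟨hInn, ?_⟩
    -- integrability of the integrand
    have hmeasI : Measurable (fun u : ℝ => (Fbar (t*(1-u))/Fbar t - 1) * (Fbar (t*u)/Fbar t)) := by
      apply Measurable.mul
      · exact ((hFmeas.comp ((measurable_const.sub measurable_id).const_mul t)).div_const _).sub
          measurable_const
      · exact (hFmeas.comp (measurable_id.const_mul t)).div_const _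
    have hFt := hFpos t
    have hintI : IntervalIntegrable
        (fun u => (Fbar (t*(1-u))/Fbar t - 1) * (Fbar (t*u)/Fbar t)) volume a δ := by
      rw [intervalIntegrable_iff]
      apply Measure.integrableOn_of_bounded (M := (1/Fbar t + 1) * (1/Fbar t))
      · exact measure_Ioc_lt_top.ne
      · exact hmeasI.aestronglyMeasurable
      · apply ae_of_all
        intro u
        have hAnn : 0 ≤ Fbar (t*(1-u))/Fbar t := div_nonneg (hFnn _) (hFnn t)
        have hBnn : 0 ≤ Fbar (t*u)/Fbar t := div_nonneg (hFnn _) (hFnn t)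
        have hAle : Fbar (t*(1-u))/Fbar t ≤ 1/Fbar t :=
          div_le_div_of_nonneg_right (hFle1 _) hFt.le
        have hBle : Fbar (t*u)/Fbar t ≤ 1/Fbar t :=
          div_le_div_of_nonneg_right (hFle1 _) hFt.le
        rw [Real.norm_eq_abs, abs_mul]
        have habs1 : |Fbar (t*(1-u))/Fbar t - 1| ≤ 1/Fbar t + 1 := by
          rw [abs_le]
          constructor <;> [linarith; linarith]
        have habs2 : |Fbar (t*u)/Fbar t| ≤ 1/Fbar t := by
          rw [abs_of_nonneg hBnn]; exact hBle
        have h1Ft : 0 < 1/Fbar t := by positivity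
        exact mul_le_mul habs1 habs2 (abs_nonneg _) (by linarith)
    -- pointwise domination
    have hGle : ∀ u ∈ Icc a δ, (Fbar (t*(1-u))/Fbar t - 1) * (Fbar (t*u)/Fbar t)
        ≤ (C₅/Fbar t) * (u * Fbar (t*u)) := by
      intro u hu
      have hu0 : 0 ≤ u := le_trans ha0.le hu.1
      have hu2 : u ≤ 1/2 := le_trans hu.2 hδh
      have hbc := hBCt u ⟨hu0, hu2⟩
      have hG : Fbar (t*(1-u))/Fbar t - 1 ≤ C₅ * u := by
        rw [sub_le_iff_le_add, div_le_iff₀ hFt]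
        nlinarith [hbc]
      have hKnn : 0 ≤ Fbar (t*u)/Fbar t := div_nonneg (hFnn _) (hFnn t)
      calc (Fbar (t*(1-u))/Fbar t - 1) * (Fbar (t*u)/Fbar t)
          ≤ (C₅*u) * (Fbar (t*u)/Fbar t) := mul_le_mul_of_nonneg_right hG hKnn
        _ = (C₅/Fbar t) * (u * Fbar (t*u)) := by field_simp
    have hmono1 : I t δ ≤ (C₅/Fbar t) * ∫ u in a..δ, u * Fbar (t*u) := by
      have hint2 : IntervalIntegrable (fun u => (C₅/Fbar t) * (u * Fbar (t*u))) volume a δ :=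
        (stmt8_intable Fbar hFmeas hFabs t a δ).const_mul _
      have hm := intervalIntegral.integral_mono_on haδ.le hintI hint2 hGle
      rwa [intervalIntegral.integral_const_mul] at hm
    -- cut the lower limit to a dyadic point
    have hex : ∃ m : ℕ, δ/2^m ≤ a := by
      obtain ⟨m, hm⟩ := exists_pow_lt_of_lt_one (div_pos ha0 hδ0) (by norm_num : (1:ℝ)/2 < 1)
      refine ⟨m, le_of_lt ?_⟩
      have h2 : ((1:ℝ)/2)^m = 1/2^m := by rw [div_pow, one_pow]
      rw [h2] at hm
      calc δ/2^m = δ*(1/2^m) := by ring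
        _ < δ*(a/δ) := by exact mul_lt_mul_of_pos_left hm hδ0
        _ = a := by field_simp
    set n := Nat.find hex with hndef
    have hna : δ/2^n ≤ a := Nat.find_spec hex
    have hn0 : n ≠ 0 := by
      intro h0
      rw [hndef] at h0
      have h1 := Nat.find_spec hex
      rw [h0] at h1
      simp at h1
      linarith
    have hprev : a < δ/2^(n-1) := by
      have h1 := Nat.find_min hex (m := n-1) (by omega)
      push_neg at h1
      exact h1
    have hTn : T_D ≤ t*δ/2^n := by
      have h2n1 : (0:ℝ) < 2^(n-1) := by positivity
      have heq2 : δ/2^n = (δ/2^(n-1))/2 := by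
        have hp : (2:ℝ)^n = 2^(n-1)*2 := by
          rw [← pow_succ]; congr 1; omega
        rw [hp, ← div_div]
      have h1 : a/2 < δ/2^n := by rw [heq2]; linarith
      have h2 : t*(a/2) ≤ t*(δ/2^n) := mul_le_mul_of_nonneg_left h1.le ht0.le
      have h3 : t*(a/2) = h t/2 := by rw [hadef]; field_simp
      have h4 : 2*T_D ≤ h t := hht2
      calc T_D ≤ h t/2 := by linarith
        _ = t*(a/2) := h3.symm
        _ ≤ t*(δ/2^n) := h2
        _ = t*δ/2^n := by ring
    have hcut : ∫ u in a..δ, u * Fbar (t*u) ≤ ∫ u in (δ/2^n)..δ, u * Fbar (t*u) := by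
      have hsplit := intervalIntegral.integral_add_adjacent_intervals
        (stmt8_intable Fbar hFmeas hFabs t (δ/2^n) a) (stmt8_intable Fbar hFmeas hFabs t a δ)
      have hnn2 : 0 ≤ ∫ u in (δ/2^n)..a, u * Fbar (t*u) := by
        apply intervalIntegral.integral_nonneg hna
        intro u hu
        exact mul_nonneg (le_trans (by positivity) hu.1) (hFnn _)
      linarith [hsplit]
    have hdya := stmt8_dyadic Fbar hFmeas hFnn hFabs hFanti c T_D hTDpos hc0 hc4 hdub
      t δ ht0 hδ0 n hTn
    have hdya' : ∫ u in (δ/2^n)..δ, u * Fbar (t*u) ≤ (c/(1-c/4)) * (δ^2 * Fbar (t*δ)) := by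
      have h1 : (0:ℝ) ≤ (c/4)^n := by positivity
      have h14 : (0:ℝ) < 1 - c/4 := by linarith
      have hKpos : 0 ≤ c/(1-c/4) := by positivity
      have h2 : 0 ≤ δ^2 * Fbar (t*δ) := mul_nonneg (sq_nonneg δ) (hFnn _)
      nlinarith [hdya, mul_nonneg (mul_nonneg hKpos h1) h2]
    calc I t δ ≤ (C₅/Fbar t) * ∫ u in a..δ, u * Fbar (t*u) := hmono1
      _ ≤ (C₅/Fbar t) * ((c/(1-c/4)) * (δ^2 * Fbar (t*δ))) := by
          apply mul_le_mul_of_nonneg_left (le_trans hcut hdya')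
          positivity
      _ = C₅ * (c/(1-c/4)) * δ^2 * (Fbar (δ*t)/Fbar t) := by
          rw [mul_comm t δ]
          field_simp
  obtain ⟨C₈, hC₈, hEVB⟩ := EVB
  -- limsup bounds
  have LB : ∀ δ : ℝ, 0 < δ → δ ≤ 1/2 →
      0 ≤ Filter.limsup (fun t => I t δ) atTop ∧
      Filter.limsup (fun t => I t δ) atTop ≤ C₈ * δ^2 * δ ^ (-α) := by
    intro δ hδ0 hδh
    have hev := hEVB δ hδ0 hδh
    have htend : Tendsto (fun t => C₈ * δ^2 * (Fbar (δ * t) / Fbar t)) atTop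
        (nhds (C₈ * δ^2 * δ ^ (-α))) := (hA1 δ hδ0).const_mul _
    have hBoundAbove : IsBoundedUnder (· ≤ ·) atTop (fun t => I t δ) := by
      apply (htend.isBoundedUnder_le).mono_le
      exact hev.mono fun t ht => ht.2
    constructor
    · apply le_limsup_of_frequently_le
      · exact (hev.mono fun t ht => ht.1).frequently
      · exact hBoundAbove
    · have := limsup_le_limsup (hev.mono fun t ht => ht.2)
        (isCoboundedUnder_le_of_eventually_le atTop (hev.mono fun t ht => ht.1))
        htend.isBoundedUnder_le
      rwa [htend.limsup_eq] at this
  -- squeeze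
  have hupper : Tendsto (fun δ : ℝ => C₈ * δ^2 * δ ^ (-α)) (nhdsWithin 0 (Set.Ioi 0)) (nhds 0) := by
    have h1 : Tendsto (fun δ : ℝ => δ ^ (2 - α)) (nhdsWithin 0 (Set.Ioi 0)) (nhds 0) := by
      have hc : ContinuousAt (fun δ : ℝ => δ ^ (2 - α)) 0 :=
        Real.continuousAt_rpow_const 0 (2 - α) (Or.inr (by linarith))
      have := hc.tendsto
      rw [Real.zero_rpow (by intro hh; linarith : (2:ℝ) - α ≠ 0)] at this
      exact this.mono_left nhdsWithin_le_nhds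
    have h2 : Tendsto (fun δ : ℝ => C₈ * δ ^ (2 - α)) (nhdsWithin 0 (Set.Ioi 0)) (nhds 0) := by
      have := h1.const_mul C₈
      rwa [mul_zero] at this
    apply h2.congr'
    filter_upwards [self_mem_nhdsWithin] with δ (hδ : δ ∈ Set.Ioi 0)
    have hδ0 : (0:ℝ) < δ := hδ
    rw [show (2:ℝ) - α = 2 + (-α) by ring, Real.rpow_add hδ0, Real.rpow_two]
    ring
  have hlower : Tendsto (fun _ : ℝ => (0:ℝ)) (nhdsWithin 0 (Set.Ioi 0)) (nhds 0) :=
    tendsto_const_nhds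
  apply tendsto_of_tendsto_of_tendsto_of_le_of_le' hlower hupper
  · filter_upwards [Ioo_mem_nhdsGT_of_mem (by constructor <;> norm_num :
      (0:ℝ) ∈ Set.Ico 0 (1/2))] with δ hδ
    exact (LB δ hδ.1 hδ.2.le).1
  · filter_upwards [Ioo_mem_nhdsGT_of_mem (by constructor <;> norm_num :
      (0:ℝ) ∈ Set.Ico 0 (1/2))] with δ hδ
    exact (LB δ hδ.1 hδ.2.le).2
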